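/- Let Σ be a type and a ∈ Σ. Let Σ*⊗ℕ denote the set of pairs (w,i) with w ∈ Σ* and i < |w|, f_a : Σ*⊗ℕ → Σ* the map sending (w,i) to the word obtained from w by replacing its i-th letter by a, and f_r : Σ*⊗ℕ → Σ* the map sending (w,i) to the prefix w₀⋯w_{i−1}. Let F be a proper filter of subsets of Σ* (a nonempty collection of subsets, upward closed, closed under finite intersections, and not containing the empty set), and let μ be an ultrafilter on Σ*. If LaΣ* ∈ μ for every L ∈ F, then there exists an ultrafilter γ on Σ*⊗ℕ such that μ = γ.map f_a and F ⊆ γ.map f_r. -/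

import Mathlib

/-- The language `LaΣ* = {u·a·v : u ∈ L, v ∈ Σ*}`. -/
def LaStar {A : Type*} (L : Set (List A)) (a : A) : Set (List A) :=
  {x | ∃ u ∈ L, ∃ v : List A, x = u ++ [a] ++ v}

/-- `Σ*⊗ℕ`: words with a marked position. -/
def WordPos (A : Type*) : Type _ := {p : List A × ℕ // p.2 < p.1.length}

/-- `f_a : Σ*⊗ℕ → Σ*` replaces the marked letter by `a`. -/
def fLetter {A : Type*} (a : A) (p : WordPos A) : List A := p.1.1.set p.1.2 a

/-- `f_r : Σ*⊗ℕ → Σ*` takes the prefix before the marked position. -/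
def fPrefix {A : Type*} (p : WordPos A) : List A := p.1.1.take p.1.2

lemma set_append_singleton {A : Type*} (a : A) (u v : List A) :
    (u ++ a :: v).set u.length a = u ++ a :: v := by
  induction u with
  | nil => simp
  | cons b u ih => simp [List.set, ih]

/-- If `F` is a proper filter of subsets of `Σ*` and `LaΣ* ∈ μ` for every `L ∈ F`, then
there is an ultrafilter `γ` on `Σ*⊗ℕ` with `μ = βf_a(γ)` and `F ⊆ βf_r(γ)`. -/
theorem stmt17 {A : Type*} (a : A) (F : Set (Set (List A)))
    (hne : F.Nonempty)
    (hup : ∀ L ∈ F, ∀ L' : Set (List A), L ⊆ L' → L' ∈ F)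
    (hinter : ∀ L ∈ F, ∀ L' ∈ F, L ∩ L' ∈ F)
    (hproper : ∅ ∉ F)
    (μ : Ultrafilter (List A))
    (h : ∀ L ∈ F, LaStar L a ∈ μ) :
    ∃ γ : Ultrafilter (WordPos A),
      μ = γ.map (fLetter a) ∧ ∀ L ∈ F, L ∈ γ.map fPrefix := by
  obtain ⟨L₀, hL₀⟩ := hne
  -- the filter generated by F
  let G : Filter (List A) :=
    { sets := F
      univ_sets := hup L₀ hL₀ _ (Set.subset_univ _)
      sets_of_superset := fun hs hst => hup _ hs _ hst
      inter_sets := fun hs ht => hinter _ hs _ ht }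
  have hGmem : ∀ L, L ∈ G ↔ L ∈ F := fun _ => Iff.rfl
  let f : Filter (WordPos A) :=
    Filter.comap (fLetter a) μ ⊓ Filter.comap fPrefix G
  have hf : f.NeBot := by
    rw [Filter.inf_neBot_iff]
    intro s hs t ht
    obtain ⟨M, hM, hMs⟩ := hs
    obtain ⟨L, hL, hLt⟩ := ht
    have hμ : (M ∩ LaStar L a) ∈ μ := Filter.inter_mem hM (h L hL)
    obtain ⟨x, hxM, u, huL, v, hxv⟩ := μ.nonempty_of_mem hμ
    have hlen : u.length < x.length := by
      subst hxv; simp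
    refine ⟨⟨(x, u.length), hlen⟩, hMs ?_, hLt ?_⟩
    · show x.set u.length a ∈ M
      have : x.set u.length a = x := by
        subst hxv; simpa using set_append_singleton a u v
      rwa [this]
    · show x.take u.length ∈ L
      have : x.take u.length = u := by
        subst hxv
        rw [List.append_assoc]
        exact List.take_left
      rwa [this]
  refine ⟨Ultrafilter.of f, ?_, ?_⟩
  · have h1 : (Ultrafilter.of f : Filter (WordPos A)) ≤ f := Ultrafilter.of_le f
    have h2 : (((Ultrafilter.of f).map (fLetter a) : Ultrafilter (List A)) : Filter (List A))
        ≤ (μ : Filter (List A)) := by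
      rw [Ultrafilter.coe_map]
      calc Filter.map (fLetter a) (Ultrafilter.of f)
          ≤ Filter.map (fLetter a) (Filter.comap (fLetter a) μ) :=
            Filter.map_mono (h1.trans inf_le_left)
        _ ≤ μ := Filter.map_comap_le
    exact (Ultrafilter.coe_injective (μ.unique h2)).symm
  · intro L hL
    show fPrefix ⁻¹' L ∈ Ultrafilter.of f
    exact (Ultrafilter.of_le f) (Filter.mem_inf_of_right (Filter.preimage_mem_comap hL))
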